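/- For all integers n and i with n ≥ 4 and 1 ≤ i ≤ n−3: (1/2)^(n−1)·C(n−1, i−1) > (1/2)^(n−4)·C(n−4, i−1) if and only if 2i ≥ n; equivalently, (n−1)(n−2)(n−3) > 8(n−i)(n−i−1)(n−i−2) if and only if 2i ≥ n. Here C(a,b) denotes the binomial coefficient. -/

import Mathlib

set_option maxHeartbeats 1600000

theorem binomial_comparison_sign (n i : ℕ) (hn : 4 ≤ n) (hi1 : 1 ≤ i) (hi2 : i ≤ n - 3) :
    ((1 / 2 : ℝ) ^ (n - 1) * ((n - 1).choose (i - 1) : ℝ)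
        > (1 / 2 : ℝ) ^ (n - 4) * ((n - 4).choose (i - 1) : ℝ) ↔ n ≤ 2 * i) ∧
    (((n : ℝ) - 1) * ((n : ℝ) - 2) * ((n : ℝ) - 3)
        > 8 * ((n : ℝ) - i) * ((n : ℝ) - i - 1) * ((n : ℝ) - i - 2) ↔ n ≤ 2 * i) := by
  obtain ⟨k, rfl⟩ : ∃ k, i = k + 1 := ⟨i - 1, by omega⟩
  obtain ⟨d, rfl⟩ : ∃ d, n = k + d + 4 := ⟨n - k - 4, by omega⟩
  clear hn hi1 hi2
  have e1 : k + d + 4 - 1 = k + d + 3 := by omega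
  have e2 : k + d + 4 - 4 = k + d := by omega
  have e3 : k + 1 - 1 = k := by omega
  rw [e1, e2, e3]
  -- choose identity
  have h1 := Nat.choose_mul_succ_eq (k + d) k
  have h2 := Nat.choose_mul_succ_eq (k + d + 1) k
  have h3 := Nat.choose_mul_succ_eq (k + d + 2) k
  rw [show k + d + 1 - k = d + 1 from by omega] at h1
  rw [show k + d + 1 + 1 - k = d + 2 from by omega] at h2
  rw [show k + d + 2 + 1 - k = d + 3 from by omega] at h3
  have h1' : ((k + d).choose k : ℝ) * (k + d + 1) = ((k + d + 1).choose k : ℝ) * (d + 1) := by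
    exact_mod_cast congrArg (Nat.cast : ℕ → ℝ) h1
  have h2' : ((k + d + 1).choose k : ℝ) * (k + d + 2) = ((k + d + 2).choose k : ℝ) * (d + 2) := by
    have := congrArg (Nat.cast : ℕ → ℝ) h2; push_cast at this; linarith
  have h3' : ((k + d + 2).choose k : ℝ) * (k + d + 3) = ((k + d + 3).choose k : ℝ) * (d + 3) := by
    have := congrArg (Nat.cast : ℕ → ℝ) h3; push_cast at this; linarith
  set A0 : ℝ := ((k + d).choose k : ℝ) with hA0
  set A3 : ℝ := ((k + d + 3).choose k : ℝ) with hA3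
  have hkey : A0 * (((k:ℝ) + d + 1) * ((k + d + 2) * (k + d + 3)))
      = A3 * (((d:ℝ) + 1) * ((d + 2) * (d + 3))) := by
    linear_combination (((k:ℝ) + d + 2) * ((k:ℝ) + d + 3)) * h1'
      + (((d:ℝ) + 1) * ((k:ℝ) + d + 3)) * h2' + (((d:ℝ) + 1) * ((d:ℝ) + 2)) * h3'
  have hA0pos : (0:ℝ) < A0 := by
    rw [hA0]; exact_mod_cast Nat.choose_pos (Nat.le_add_right k d)
  have hA3pos : (0:ℝ) < A3 := by
    rw [hA3]; exact_mod_cast Nat.choose_pos (by omega : k ≤ k + d + 3)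
  have hPpos : (0:ℝ) < ((d:ℝ) + 1) * ((d + 2) * (d + 3)) := by positivity
  have hQpos : (0:ℝ) < ((k:ℝ) + d + 1) * ((k + d + 2) * (k + d + 3)) := by positivity
  -- polynomial iff
  have hd0 : (0:ℝ) ≤ (d:ℝ) := Nat.cast_nonneg d
  have hpoly : (((k:ℝ) + d + 1) * ((k + d + 2) * (k + d + 3))
      > 8 * (((d:ℝ) + 1) * ((d + 2) * (d + 3)))) ↔ k + d + 4 ≤ 2 * (k + 1) := by
    constructor
    · intro h
      by_contra hc
      have hk : (k : ℝ) ≤ (d : ℝ) + 1 := by exact_mod_cast (by omega : k ≤ d + 1)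
      have hb : ((k:ℝ) + d + 1) * (((k:ℝ) + d + 2) * ((k:ℝ) + d + 3))
          ≤ (2*(d:ℝ)+2) * ((2*(d:ℝ)+3) * (2*(d:ℝ)+4)) :=
        mul_le_mul (by linarith)
          (mul_le_mul (by linarith) (by linarith) (by positivity) (by positivity))
          (by positivity) (by positivity)
      nlinarith [hb, h, hd0, mul_nonneg hd0 hd0]
    · intro h
      have hk : (d : ℝ) + 2 ≤ (k : ℝ) := by exact_mod_cast (by omega : d + 2 ≤ k)
      have hb : (2*(d:ℝ)+3) * ((2*(d:ℝ)+4) * (2*(d:ℝ)+5))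
          ≤ ((k:ℝ) + d + 1) * (((k:ℝ) + d + 2) * ((k:ℝ) + d + 3)) :=
        mul_le_mul (by linarith)
          (mul_le_mul (by linarith) (by linarith) (by positivity) (by positivity))
          (by positivity) (by positivity)
      nlinarith [hb, hd0, mul_nonneg hd0 hd0]
  -- choose iff
  have hchoose : (A3 > 8 * A0) ↔ k + d + 4 ≤ 2 * (k + 1) := by
    rw [← hpoly]
    constructor
    · intro h
      have h2 : 8 * A0 * (((d:ℝ) + 1) * ((d + 2) * (d + 3))) < A3 * (((d:ℝ) + 1) * ((d + 2) * (d + 3))) :=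
        mul_lt_mul_of_pos_right h hPpos
      rw [← hkey] at h2
      have h3 : A0 * (8 * (((d:ℝ) + 1) * ((d + 2) * (d + 3))))
          < A0 * (((k:ℝ) + d + 1) * ((k + d + 2) * (k + d + 3))) := by
        rw [show A0 * (8 * (((d:ℝ) + 1) * ((d + 2) * (d + 3)))) = 8 * A0 * (((d:ℝ) + 1) * ((d + 2) * (d + 3))) from by ring]
        exact h2
      exact (mul_lt_mul_iff_right₀ hA0pos).mp h3
    · intro h
      have h2 : A0 * (8 * (((d:ℝ) + 1) * ((d + 2) * (d + 3))))
          < A0 * (((k:ℝ) + d + 1) * ((k + d + 2) * (k + d + 3))) :=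
        mul_lt_mul_of_pos_left h hA0pos
      rw [hkey] at h2
      have h3 : 8 * A0 * (((d:ℝ) + 1) * ((d + 2) * (d + 3))) < A3 * (((d:ℝ) + 1) * ((d + 2) * (d + 3))) := by
        rw [show (8:ℝ) * A0 * (((d:ℝ) + 1) * ((d + 2) * (d + 3))) = A0 * (8 * (((d:ℝ) + 1) * ((d + 2) * (d + 3)))) from by ring]
        exact h2
      exact (mul_lt_mul_iff_left₀ hPpos).mp h3
  constructor
  · rw [← hchoose]
    have hpow : ((1:ℝ)/2) ^ (k + d + 3) = ((1:ℝ)/2) ^ (k + d) * (1/8) := by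
      rw [show k + d + 3 = (k + d) + 3 from rfl, pow_add]; norm_num
    rw [hpow]
    have hp : (0:ℝ) < ((1:ℝ)/2) ^ (k + d) := by positivity
    rw [gt_iff_lt, mul_assoc, mul_lt_mul_iff_right₀ hp]
    constructor <;> intro h <;> linarith
  · rw [← hpoly]
    push_cast
    constructor <;> intro h <;> linarith [h]
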